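/- Let f : ℝⁿ → ℝ be twice continuously differentiable, m > 0, γ ≥ 0, h > 0, and let Ψ be the classical-momentum (heavy-ball) step Ψ(x, p) = (X, P) with P = e^{−γh} p − h ∇f(x) and X = x + (h/m) P. Then the Jacobian determinant of Ψ at every point (x, p) equals det DΨ(x, p) = e^{−n γ h}; i.e., the heavy-ball map contracts phase-space volume by exactly the factor e^{−nγh} of the underlying conformal Hamiltonian flow over a time step h. -/

import Mathlib

abbrev EE (n : ℕ) := EuclideanSpace ℝ (Fin n)

open LinearMap in
lemma toMatrix_prod_four {R M ι : Type*} [CommRing R] [AddCommGroup M] [Module R M]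
    [Fintype ι] [DecidableEq ι] (b : Module.Basis ι R M) (P Q S T : M →ₗ[R] M) :
    LinearMap.toMatrix (b.prod b) (b.prod b)
      ((P ∘ₗ LinearMap.fst R M M + Q ∘ₗ LinearMap.snd R M M).prod
       (S ∘ₗ LinearMap.fst R M M + T ∘ₗ LinearMap.snd R M M))
    = Matrix.fromBlocks (toMatrix b b P) (toMatrix b b Q) (toMatrix b b S) (toMatrix b b T) := by
  ext (i|i) (j|j) <;> simp [LinearMap.toMatrix_apply, Module.Basis.prod_apply]


/-- The heavy-ball (classical momentum) step in phase space:
`P = e^{−γh} p − h ∇f(x)`, `X = x + (h/m) P`. -/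
noncomputable def heavyBallStep {n : ℕ} (f : EuclideanSpace ℝ (Fin n) → ℝ) (m γ h : ℝ)
    (z : EuclideanSpace ℝ (Fin n) × EuclideanSpace ℝ (Fin n)) :
    EuclideanSpace ℝ (Fin n) × EuclideanSpace ℝ (Fin n) :=
  let P := Real.exp (-γ * h) • z.2 - h • gradient f z.1
  (z.1 + (h / m) • P, P)

/-- the Jacobian determinant of the heavy-ball step is exactly
`e^{−nγh}`: the heavy-ball map contracts phase-space volume by exactly the
factor of the underlying conformal Hamiltonian flow over a time step `h`. -/
theorem heavyBall_jacobian_det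
    {n : ℕ} (f : EuclideanSpace ℝ (Fin n) → ℝ) (hf : ContDiff ℝ 2 f)
    (m γ h : ℝ) (hm : 0 < m) (hγ : 0 ≤ γ) (hh : 0 < h)
    (x p : EuclideanSpace ℝ (Fin n)) :
    LinearMap.det ((fderiv ℝ (heavyBallStep f m γ h) (x, p)).toLinearMap)
      = Real.exp (-(n : ℝ) * γ * h) := by
  classical
  set c : ℝ := Real.exp (-γ * h) with hc
  -- differentiability of the gradient
  have hgrad : DifferentiableAt ℝ (gradient f) x := by
    have h1 : ContDiff ℝ 1 (fderiv ℝ f) := hf.fderiv_right (by norm_num)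
    have h2 : DifferentiableAt ℝ (fderiv ℝ f) x := h1.differentiable one_ne_zero x
    exact ((InnerProductSpace.toDual ℝ (EE n)).symm.toContinuousLinearEquiv.differentiableAt).comp x h2
  set B : EE n →L[ℝ] EE n := fderiv ℝ (gradient f) x with hBdef
  have hB : HasFDerivAt (gradient f) B x := hgrad.hasFDerivAt
  set Lp : (EE n × EE n) →L[ℝ] EE n :=
    c • ContinuousLinearMap.snd ℝ (EE n) (EE n) - h • (B.comp (ContinuousLinearMap.fst ℝ (EE n) (EE n))) with hLp
  have hP : HasFDerivAt (fun z : EE n × EE n => c • z.2 - h • gradient f z.1) Lp (x, p) := by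
    have h1 : HasFDerivAt (fun z : EE n × EE n => gradient f z.1)
        (B.comp (ContinuousLinearMap.fst ℝ (EE n) (EE n))) (x, p) :=
      by have := hB.comp (x, p) (hasFDerivAt_fst (𝕜 := ℝ) (p := (x, p))); exact this
    exact ((hasFDerivAt_snd.const_smul c).sub (h1.const_smul h))
  set LΨ : (EE n × EE n) →L[ℝ] EE n × EE n :=
    (ContinuousLinearMap.fst ℝ (EE n) (EE n) + (h / m) • Lp).prod Lp with hLΨ
  have hΨ : HasFDerivAt (heavyBallStep f m γ h) LΨ (x, p) := by
    have := (HasFDerivAt.prodMk (hasFDerivAt_fst.add (hP.const_smul (h / m))) hP)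
    exact this
  rw [hΨ.fderiv]
  -- now compute the determinant of LΨ
  set b : Module.Basis (Fin n) ℝ (EE n) := (EuclideanSpace.basisFun (Fin n) ℝ).toBasis
  set Bl : EE n →ₗ[ℝ] EE n := B.toLinearMap
  set fstl := LinearMap.fst ℝ (EE n) (EE n)
  set sndl := LinearMap.snd ℝ (EE n) (EE n)
  set A : (EE n × EE n) →ₗ[ℝ] EE n × EE n :=
    ((LinearMap.id ∘ₗ fstl + ((h / m) • LinearMap.id) ∘ₗ sndl).prod
      ((0 : EE n →ₗ[ℝ] EE n) ∘ₗ fstl + LinearMap.id ∘ₗ sndl)) with hA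
  set L0 : (EE n × EE n) →ₗ[ℝ] EE n × EE n :=
    ((LinearMap.id ∘ₗ fstl + (0 : EE n →ₗ[ℝ] EE n) ∘ₗ sndl).prod
      (((-h) • Bl) ∘ₗ fstl + ((c • LinearMap.id : EE n →ₗ[ℝ] EE n)) ∘ₗ sndl)) with hL0
  have hfactor : (LΨ.toLinearMap : (EE n × EE n) →ₗ[ℝ] EE n × EE n) = A ∘ₗ L0 := by
    apply LinearMap.ext
    rintro ⟨u, v⟩
    show LΨ (u, v) = A (L0 (u, v))
    simp only [hLΨ, hA, hL0, hLp, fstl, sndl, Bl, ContinuousLinearMap.prod_apply,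
      ContinuousLinearMap.add_apply, ContinuousLinearMap.smul_apply,
      ContinuousLinearMap.sub_apply, ContinuousLinearMap.coe_fst',
      ContinuousLinearMap.coe_snd', ContinuousLinearMap.comp_apply,
      LinearMap.prod_apply, LinearMap.add_apply, LinearMap.comp_apply,
      LinearMap.fst_apply, LinearMap.snd_apply, LinearMap.id_apply,
      LinearMap.smul_apply, LinearMap.zero_apply, ContinuousLinearMap.coe_coe,
      Pi.prod, Function.prod, Prod.mk.injEq]
    constructor <;> module
  rw [hfactor, LinearMap.det_comp]
  have hdetA : LinearMap.det A = 1 := by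
    rw [← LinearMap.det_toMatrix (b.prod b), hA, toMatrix_prod_four]
    simp only [map_zero]
    rw [Matrix.det_fromBlocks_zero₂₁]
    simp
  have hdetL0 : LinearMap.det L0 = c ^ n := by
    rw [← LinearMap.det_toMatrix (b.prod b), hL0, toMatrix_prod_four]
    simp only [map_zero]
    rw [Matrix.det_fromBlocks_zero₁₂]
    simp [Matrix.det_smul, map_smul, LinearMap.toMatrix_id]
  rw [hdetA, hdetL0, one_mul, hc, ← Real.exp_nat_mul]
  ring_nf
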